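/- (Lipschitz bound for the wealth-ratio map). Fix ω, vectors λ, λ* in the interior of the simplex Δ⊂ℝ^K with min_k λ*_k = ζ > 0, and a Δ-valued vector μ with ∑_k μ_k = 1 and μ_k ≥ 0. Define for x ≥ 0: f(x) = x·[∑_k μ_k λ_k/(λ_k x + λ*_k)] / [∑_k ν_k λ*_k/(λ_k x + λ*_k)], where ν∈Δ as well. Then for 0 < x ≤ 1, 0 < f(x)/x ≤ 2ζ^{-2}. -/

import Mathlib

/-- Lipschitz bound for the wealth-ratio map: with `λ, λ*` interior points of the simplex,
`ζ ≤ min_k λ*_k`, and simplex-valued weight vectors `μ, ν`, the map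
`f(x) = x·[Σ μ_k λ_k/(λ_k x + λ*_k)]/[Σ ν_k λ*_k/(λ_k x + λ*_k)]`
satisfies `0 < f(x)/x ≤ 2ζ⁻²` for `0 < x ≤ 1`. -/
theorem stmt18 (K : ℕ) [NeZero K]
    (lam lams muv nu : Fin K → ℝ) (ζ : ℝ)
    (hlamΔ : lam ∈ stdSimplex ℝ (Fin K)) (hlamsΔ : lams ∈ stdSimplex ℝ (Fin K))
    (hlampos : ∀ k, 0 < lam k) (hlamspos : ∀ k, 0 < lams k)
    (hζpos : 0 < ζ) (hζ : ∀ k, ζ ≤ lams k)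
    (hμΔ : muv ∈ stdSimplex ℝ (Fin K)) (hνΔ : nu ∈ stdSimplex ℝ (Fin K)) :
    ∀ x : ℝ, 0 < x → x ≤ 1 →
      0 < (x * (∑ k, muv k * (lam k / (lam k * x + lams k))) /
            (∑ k, nu k * (lams k / (lam k * x + lams k)))) / x ∧
      (x * (∑ k, muv k * (lam k / (lam k * x + lams k))) /
            (∑ k, nu k * (lams k / (lam k * x + lams k)))) / x ≤ 2 / ζ ^ 2 := by
  intro x hx hx1
  set A := ∑ k, muv k * (lam k / (lam k * x + lams k)) with hA
  set B := ∑ k, nu k * (lams k / (lam k * x + lams k)) with hB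
  have hden : ∀ k, 0 < lam k * x + lams k := fun k =>
    add_pos (mul_pos (hlampos k) hx) (hlamspos k)
  have hlamle : ∀ k, lam k ≤ 1 := by
    intro k
    rw [← hlamΔ.2]
    exact Finset.single_le_sum (fun j _ => (hlampos j).le) (Finset.mem_univ k)
  have hlamsle : ∀ k, lams k ≤ 1 := by
    intro k
    rw [← hlamsΔ.2]
    exact Finset.single_le_sum (fun j _ => (hlamspos j).le) (Finset.mem_univ k)
  -- positivity of A
  have hexμ : ∃ k, 0 < muv k := by
    by_contra h
    push_neg at h
    have : (∑ k, muv k) ≤ 0 := Finset.sum_nonpos fun k _ => h k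
    rw [hμΔ.2] at this; linarith
  obtain ⟨k0, hk0⟩ := hexμ
  have hApos : 0 < A := by
    apply Finset.sum_pos'
    · intro k _
      exact mul_nonneg (hμΔ.1 k) (div_nonneg (hlampos k).le (hden k).le)
    · exact ⟨k0, Finset.mem_univ k0,
        mul_pos hk0 (div_pos (hlampos k0) (hden k0))⟩
  have hexν : ∃ k, 0 < nu k := by
    by_contra h
    push_neg at h
    have : (∑ k, nu k) ≤ 0 := Finset.sum_nonpos fun k _ => h k
    rw [hνΔ.2] at this; linarith
  obtain ⟨k1, hk1⟩ := hexν
  have hBpos : 0 < B := by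
    apply Finset.sum_pos'
    · intro k _
      exact mul_nonneg (hνΔ.1 k) (div_nonneg (hlamspos k).le (hden k).le)
    · exact ⟨k1, Finset.mem_univ k1,
        mul_pos hk1 (div_pos (hlamspos k1) (hden k1))⟩
  -- A ≤ 1/ζ
  have hAle : A ≤ 1 / ζ := by
    have : A ≤ ∑ k, muv k * (1 / ζ) := by
      apply Finset.sum_le_sum
      intro k _
      apply mul_le_mul_of_nonneg_left _ (hμΔ.1 k)
      rw [div_le_div_iff₀ (hden k) hζpos]
      have h1 : ζ ≤ lam k * x + lams k := le_add_of_nonneg_of_le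
        (mul_nonneg (hlampos k).le hx.le) (hζ k)
      nlinarith [hlamle k]
    rwa [← Finset.sum_mul, hμΔ.2, one_mul] at this
  -- B ≥ ζ/2
  have hBge : ζ / 2 ≤ B := by
    have : (∑ k, nu k * (ζ / 2)) ≤ B := by
      apply Finset.sum_le_sum
      intro k _
      apply mul_le_mul_of_nonneg_left _ (hνΔ.1 k)
      rw [div_le_div_iff₀ two_pos (hden k)]
      have h2 : lam k * x + lams k ≤ 2 := by
        have := mul_le_one₀ (hlamle k) hx.le hx1
        nlinarith [hlamsle k]
      nlinarith [hζ k, hlamspos k]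
    rwa [← Finset.sum_mul, hνΔ.2, one_mul] at this
  have hkey : (x * A / B) / x = A / B := by
    field_simp
  rw [hkey]
  constructor
  · exact div_pos hApos hBpos
  · calc A / B ≤ (1 / ζ) / (ζ / 2) := by
          exact div_le_div₀ (by positivity) hAle (by positivity) hBge
        _ = 2 / ζ ^ 2 := by field_simp
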